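/- Suppose n = dim_ℂ V ≤ r - 1. Then the element z = (1 - J_1J_2)(1 - J_1J_3)⋯(1 - J_1J_r) · Σ_{σ ∈ S_r} sgn(σ) ρ(σ) of End(⊗_ℝ^r V) is zero, where ρ(σ) permutes tensor slots; consequently, the linear map from the span of marked diagrams to End_{U(V,h)}(⊗_ℝ^r V) is not injective when n < r. -/

import Mathlib

open scoped TensorProduct
open PiTensorProduct

variable (V : Type*) [AddCommGroup V] [Module ℂ V] [Module ℝ V] [IsScalarTower ℝ ℂ V]

/-- Multiplication by `i` on `V`, as an `ℝ`-linear map. -/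
noncomputable def mulI : V →ₗ[ℝ] V :=
  (Complex.I • (LinearMap.id : V →ₗ[ℂ] V)).restrictScalars ℝ

variable (r : ℕ)

/-- The operator `J_l` on `⨂[ℝ]^r V` applying multiplication by `i` in the `l`-th slot. -/
noncomputable def Jop (l : Fin r) : Module.End ℝ (⨂[ℝ] _ : Fin r, V) :=
  PiTensorProduct.map (fun i => if i = l then mulI V else LinearMap.id)

/-- The diagonal action of `g ∈ GL_ℂ(V)` on `⨂[ℝ]^r V`. -/
noncomputable def diag (g : V ≃ₗ[ℂ] V) : Module.End ℝ (⨂[ℝ] _ : Fin r, V) :=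
  PiTensorProduct.map (fun _ => g.toLinearMap.restrictScalars ℝ)

lemma Jop_comm (l m : Fin r) : Commute (Jop V r l) (Jop V r m) := by
  show _ * _ = _ * _
  rw [Module.End.mul_eq_comp, Module.End.mul_eq_comp]
  unfold Jop
  rw [← PiTensorProduct.map_comp, ← PiTensorProduct.map_comp]
  congr 1
  funext i
  split_ifs <;> simp

/-- The action `ρ(σ)` of a permutation `σ ∈ S_r` on `⨂[ℝ]^r V`, permuting the slots. -/
noncomputable def permAct {V : Type*} [AddCommGroup V] [Module ℝ V] (r : ℕ)
    (σ : Equiv.Perm (Fin r)) : Module.End ℝ (⨂[ℝ] _ : Fin r, V) :=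
  (PiTensorProduct.reindex ℝ (fun _ : Fin r => V) σ).toLinearMap

section Aux

variable {V : Type*} [AddCommGroup V] [Module ℂ V] [Module ℝ V] [IsScalarTower ℝ ℂ V] {r : ℕ}

lemma Jop_tprod (l : Fin r) (v : Fin r → V) :
    Jop V r l (tprod ℝ v) = tprod ℝ (Function.update v l (Complex.I • v l)) := by
  rw [Jop, PiTensorProduct.map_tprod]
  congr 1
  funext i
  rcases eq_or_ne i l with rfl | h
  · simp [mulI]
  · simp [h, Function.update_of_ne h]

omit [Module ℂ V] [IsScalarTower ℝ ℂ V] in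
lemma permAct_tprod (σ : Equiv.Perm (Fin r)) (v : Fin r → V) :
    permAct (V := V) r σ (tprod ℝ v) = tprod ℝ (fun i => v (σ.symm i)) :=
  PiTensorProduct.reindex_tprod σ v

omit [Module ℂ V] [IsScalarTower ℝ ℂ V] in
lemma permAct_mul (σ τ : Equiv.Perm (Fin r)) :
    permAct (V := V) r σ * permAct r τ = permAct r (σ * τ) := by
  refine PiTensorProduct.ext (MultilinearMap.ext fun v => ?_)
  simp [Module.End.mul_apply, permAct_tprod, Equiv.Perm.mul_def, Equiv.symm_trans_apply]

lemma Jop_sq (l : Fin r) : Jop V r l * Jop V r l = -1 := by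
  refine PiTensorProduct.ext (MultilinearMap.ext fun v => ?_)
  simp only [LinearMap.compMultilinearMap_apply, Module.End.mul_apply, Jop_tprod,
    Function.update_idem, Function.update_self, LinearMap.neg_apply, Module.End.one_apply]
  rw [smul_smul, Complex.I_mul_I]
  have : ((-1 : ℂ) • v l : V) = -(v l) := by
    rw [neg_smul, one_smul]
  rw [this, MultilinearMap.map_update_neg (PiTensorProduct.tprod ℝ) v l (v l), Function.update_eq_self]

lemma perm_mul_Jop (σ : Equiv.Perm (Fin r)) (l : Fin r) :
    permAct (V := V) r σ * Jop V r l = Jop V r (σ l) * permAct r σ := by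
  refine PiTensorProduct.ext (MultilinearMap.ext fun v => ?_)
  simp only [LinearMap.compMultilinearMap_apply, Module.End.mul_apply, Jop_tprod, permAct_tprod]
  congr 1
  funext i
  rcases eq_or_ne i (σ l) with rfl | h
  · rw [Equiv.symm_apply_apply]; simp
  · have h' : σ.symm i ≠ l := fun hh => h (by rw [← hh, Equiv.apply_symm_apply])
    simp [Function.update_of_ne h, Function.update_of_ne h']

end Aux

section Aux2

variable {V : Type*} [AddCommGroup V] [Module ℂ V] [Module ℝ V] [IsScalarTower ℝ ℂ V] {r : ℕ}

noncomputable def altOp (V : Type*) [AddCommGroup V] [Module ℝ V] (r : ℕ) :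
    Module.End ℝ (⨂[ℝ] _ : Fin r, V) :=
  ∑ σ : Equiv.Perm (Fin r), (Equiv.Perm.sign σ : ℤ) • permAct (V := V) r σ

omit [Module ℂ V] [IsScalarTower ℝ ℂ V] in
lemma altOp_mul_perm (τ : Equiv.Perm (Fin r)) :
    altOp V r * permAct r τ = (Equiv.Perm.sign τ : ℤ) • altOp V r := by
  rw [altOp]
  simp only [zsmul_eq_mul]
  rw [Finset.sum_mul, Finset.mul_sum]
  refine Fintype.sum_equiv (Equiv.mulRight τ)
    (fun σ => ((Equiv.Perm.sign σ : ℤ) : Module.End ℝ (⨂[ℝ] _ : Fin r, V)) * permAct r σ *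
      permAct r τ)
    (fun σ => ((Equiv.Perm.sign τ : ℤ) : Module.End ℝ (⨂[ℝ] _ : Fin r, V)) *
      (((Equiv.Perm.sign σ : ℤ) : Module.End ℝ (⨂[ℝ] _ : Fin r, V)) * permAct r σ))
    fun σ => ?_
  have hZ : (Equiv.Perm.sign τ : ℤ) * (Equiv.Perm.sign (σ * τ) : ℤ) = (Equiv.Perm.sign σ : ℤ) := by
    rw [Equiv.Perm.sign_mul, Units.val_mul, mul_comm ((Equiv.Perm.sign τ : ℤ)) _, mul_assoc,
      ← Units.val_mul, Int.units_mul_self, Units.val_one, mul_one]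
  simp only [Equiv.coe_mulRight]
  rw [mul_assoc, permAct_mul, ← mul_assoc, ← Int.cast_mul, hZ]

lemma Jop_comm' (l m : Fin r) : Commute (Jop V r l) (Jop V r m) := by
  show _ * _ = _ * _
  rw [Module.End.mul_eq_comp, Module.End.mul_eq_comp]
  unfold Jop
  rw [← PiTensorProduct.map_comp, ← PiTensorProduct.map_comp]
  congr 1
  funext i
  split_ifs <;> simp

lemma key_rel (l m : Fin r) :
    (1 - Jop V r m * Jop V r l) * (Jop V r l - Jop V r m) = 0 := by
  have hc := (Jop_comm' (V := V) m l).eq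
  have hl := Jop_sq (V := V) l
  have hm := Jop_sq (V := V) m
  have e1 : Jop V r m * Jop V r l * Jop V r l = -Jop V r m := by
    rw [mul_assoc, hl]; exact mul_neg_one (Jop V r m)
  have e2 : Jop V r m * Jop V r l * Jop V r m = -Jop V r l := by
    rw [mul_assoc, ← hc, ← mul_assoc, hm]; exact neg_one_mul (Jop V r l)
  rw [sub_mul, one_mul, mul_sub, e1, e2]
  abel

lemma PA_J {P : Module.End ℝ (⨂[ℝ] _ : Fin r, V)}
    (hPJ : ∀ l m, P * Jop V r l = P * Jop V r m) (l m : Fin r) :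
    P * altOp V r * Jop V r l = P * Jop V r m * altOp V r := by
  rw [altOp]
  simp only [zsmul_eq_mul]
  rw [Finset.mul_sum, Finset.sum_mul, Finset.mul_sum]
  refine Finset.sum_congr rfl fun σ _ => ?_
  set c : Module.End ℝ (⨂[ℝ] _ : Fin r, V) :=
    ((Equiv.Perm.sign σ : ℤ) : Module.End ℝ (⨂[ℝ] _ : Fin r, V)) with hcdef
  have h1 : P * (c * permAct r σ) = c * (P * permAct r σ) := by
    rw [← mul_assoc, hcdef, ← (Int.cast_commute ((Equiv.Perm.sign σ : ℤ)) P).eq, mul_assoc]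
  have h2 : P * Jop V r m * (c * permAct r σ) = c * (P * Jop V r m * permAct r σ) := by
    rw [← mul_assoc, hcdef,
      ← (Int.cast_commute ((Equiv.Perm.sign σ : ℤ)) (P * Jop V r m)).eq, mul_assoc]
  rw [h1, h2, mul_assoc c]
  congr 1
  rw [mul_assoc, perm_mul_Jop, ← mul_assoc, hPJ (σ l) m]

lemma eq_zero_of_self_eq_neg' {M : Type*} [AddCommGroup M] [Module ℝ M] {x : M}
    (h : x = -x) : x = 0 := by
  have h2 : (2 : ℝ) • x = 0 := by
    rw [two_smul]
    nth_rewrite 1 [h]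
    exact neg_add_cancel x
  have h3 := congrArg (fun y => ((2 : ℝ)⁻¹) • y) h2
  simpa [smul_smul] using h3

end Aux2

section Aux3

variable {V : Type*} [AddCommGroup V] [Module ℂ V] [Module ℝ V] [IsScalarTower ℝ ℂ V] {r : ℕ}

omit [Module ℂ V] [IsScalarTower ℝ ℂ V] in
lemma PA_swap {P : Module.End ℝ (⨂[ℝ] _ : Fin r, V)} {a b : Fin r} (hab : a ≠ b)
    (x : ⨂[ℝ] _ : Fin r, V) :
    (P * altOp V r) (permAct r (Equiv.swap a b) x) = -((P * altOp V r) x) := by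
  rw [← Module.End.mul_apply, mul_assoc, altOp_mul_perm, Equiv.Perm.sign_swap hab]
  have : (((-1 : ℤˣ) : ℤ)) • altOp V r = -altOp V r := by
    rw [Units.val_neg, Units.val_one, neg_zsmul, one_zsmul]
  rw [this, Module.End.mul_apply, LinearMap.neg_apply, map_neg, Module.End.mul_apply]

omit [Module ℂ V] [IsScalarTower ℝ ℂ V] in
lemma zero_of_eq {P : Module.End ℝ (⨂[ℝ] _ : Fin r, V)} {a b : Fin r} (hab : a ≠ b)
    {v : Fin r → V} (hv : v a = v b) :
    (P * altOp V r) (tprod ℝ v) = 0 := by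
  have hτ : permAct (V := V) r (Equiv.swap a b) (tprod ℝ v) = tprod ℝ v := by
    rw [permAct_tprod]
    congr 1
    funext i
    rw [Equiv.symm_swap]
    rcases eq_or_ne i a with rfl | hia
    · rw [Equiv.swap_apply_left, hv]
    rcases eq_or_ne i b with rfl | hib
    · rw [Equiv.swap_apply_right, hv]
    · rw [Equiv.swap_apply_of_ne_of_ne hia hib]
  apply eq_zero_of_self_eq_neg' (h := ?_)
  conv_lhs => rw [← hτ]
  rw [PA_swap hab]

lemma zero_of_I {P : Module.End ℝ (⨂[ℝ] _ : Fin r, V)}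
    (hPJ : ∀ l m, P * Jop V r l = P * Jop V r m) {a b : Fin r} (hab : a ≠ b)
    {x : V} {v : Fin r → V} (hva : v a = Complex.I • x) (hvb : v b = x) :
    (P * altOp V r) (tprod ℝ v) = 0 := by
  classical
  set w : Fin r → V := Function.update v a x with hw
  have hwa : w a = x := Function.update_self a x v
  have hwb : w b = x := by
    rw [hw, Function.update_of_ne (Ne.symm hab), hvb]
  have h1 : tprod ℝ v = Jop V r a (tprod ℝ w) := by
    rw [Jop_tprod, hwa, hw, Function.update_idem, ← hva, Function.update_eq_self]
  have h2 : (P * altOp V r) (Jop V r a (tprod ℝ w)) =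
      (P * altOp V r) (Jop V r b (tprod ℝ w)) := by
    rw [← Module.End.mul_apply, ← Module.End.mul_apply, PA_J hPJ a a, ← PA_J hPJ b a]
  have h3 : Jop V r b (tprod ℝ w) = permAct r (Equiv.swap a b) (tprod ℝ v) := by
    rw [Jop_tprod, hwb, permAct_tprod]
    congr 1
    funext i
    rw [Equiv.symm_swap]
    rcases eq_or_ne i a with rfl | hia
    · rw [Function.update_of_ne hab, hw, Function.update_self, Equiv.swap_apply_left, hvb]
    rcases eq_or_ne i b with rfl | hib
    · rw [Function.update_self, Equiv.swap_apply_right, hva]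
    · rw [Function.update_of_ne hib, hw, Function.update_of_ne hia,
        Equiv.swap_apply_of_ne_of_ne hia hib]
  apply eq_zero_of_self_eq_neg' (h := ?_)
  conv_lhs => rw [h1, h2, h3]
  rw [PA_swap hab]

end Aux3

section Main

variable {V : Type*} [AddCommGroup V] [Module ℂ V] [Module ℝ V] [IsScalarTower ℝ ℂ V]
  [FiniteDimensional ℂ V] {r : ℕ}

lemma main_lemma (hn : Module.finrank ℂ V < r)
    {P : Module.End ℝ (⨂[ℝ] _ : Fin r, V)}
    (hPJ : ∀ l m, P * Jop V r l = P * Jop V r m) :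
    P * altOp V r = 0 := by
  classical
  set bC := Module.finBasis ℂ V with hbC
  set bR := Complex.basisOneI.smulTower bC with hbR
  refine PiTensorProduct.ext (Module.Basis.ext_multilinear (fun _ => bR) fun j => ?_)
  simp only [LinearMap.compMultilinearMap_apply, LinearMap.zero_apply]
  set v : Fin r → V := fun i => bR (j i) with hv
  obtain ⟨a, b, hab, hj⟩ := Fintype.exists_ne_map_eq_of_card_lt (fun k => (j k).2)
    (by simpa using hn)
  have hfin2 : ∀ t : Fin 2, t = 0 ∨ t = 1 := by decide
  set x : V := bC ((j a).2) with hx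
  have hva : v a = Complex.basisOneI ((j a).1) • x := by
    rw [hv, hbR]; exact Module.Basis.smulTower_apply _ _ _
  have hvb : v b = Complex.basisOneI ((j b).1) • x := by
    rw [hv, hbR, hx, hj]; exact Module.Basis.smulTower_apply _ _ _
  rcases hfin2 ((j a).1) with h1 | h1 <;> rcases hfin2 ((j b).1) with h2 | h2
  · refine zero_of_eq hab ?_
    rw [hva, hvb, h1, h2]
  · refine zero_of_I hPJ (Ne.symm hab) (x := x) ?_ ?_
    · rw [hvb, h2]
      norm_num [Complex.coe_basisOneI]
    · rw [hva, h1]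
      norm_num [Complex.coe_basisOneI]
  · refine zero_of_I hPJ hab (x := x) ?_ ?_
    · rw [hva, h1]
      norm_num [Complex.coe_basisOneI]
    · rw [hvb, h2]
      norm_num [Complex.coe_basisOneI]
  · refine zero_of_eq hab ?_
    rw [hva, hvb, h1, h2]

end Main

section Final

variable {V : Type*} [AddCommGroup V] [Module ℂ V] [Module ℝ V] [IsScalarTower ℝ ℂ V] {r : ℕ}

lemma hPJ_all {P : Module.End ℝ (⨂[ℝ] _ : Fin r, V)} (l0 : Fin r)
    (hsplit : ∀ l, l ≠ l0 → ∃ Q, Q * (1 - Jop V r l0 * Jop V r l) = P) :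
    ∀ l m, P * Jop V r l = P * Jop V r m := by
  have step : ∀ l, P * Jop V r l = P * Jop V r l0 := by
    intro l
    rcases eq_or_ne l l0 with rfl | hl
    · rfl
    · obtain ⟨Q, hQ⟩ := hsplit l hl
      have h0 : P * (Jop V r l - Jop V r l0) = 0 := by
        rw [← hQ, mul_assoc, key_rel, mul_zero]
      rw [mul_sub] at h0
      exact sub_eq_zero.mp h0
  intro l m
  rw [step l, step m]

end Final


/-- If `n = dim_ℂ V < r`, then the element
`z = (1 - J_1J_2)⋯(1 - J_1J_r) · Σ_{σ ∈ S_r} sgn(σ) ρ(σ)` of `End(⨂[ℝ]^r V)` is zero. -/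
theorem z_eq_zero
    {V : Type*} [AddCommGroup V] [Module ℂ V] [Module ℝ V] [IsScalarTower ℝ ℂ V]
    [FiniteDimensional ℂ V]
    (r : ℕ) (hr : 1 ≤ r) (hn : Module.finrank ℂ V < r) :
    ((Finset.univ.erase (⟨0, hr⟩ : Fin r)).noncommProd
        (fun l => 1 - Jop V r ⟨0, hr⟩ * Jop V r l) (by
          intro a _ b _ _
          have h : Commute (Jop V r ⟨0, hr⟩ * Jop V r a) (Jop V r ⟨0, hr⟩ * Jop V r b) :=
            ((Jop_comm V r _ _).mul_right (Jop_comm V r _ b)).mul_left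
              ((Jop_comm V r a _).mul_right (Jop_comm V r a b))
          exact (Commute.one_left _).sub_left
            ((Commute.one_right _).sub_right h))) *
      (∑ σ : Equiv.Perm (Fin r), (Equiv.Perm.sign σ : ℤ) • permAct (V := V) r σ) = 0 := by
  classical
  refine main_lemma hn (hPJ_all ⟨0, hr⟩ ?_)
  intro l hl
  have hmem : l ∈ Finset.univ.erase (⟨0, hr⟩ : Fin r) :=
    Finset.mem_erase.2 ⟨hl, Finset.mem_univ l⟩
  exact ⟨_, Finset.noncommProd_erase_mul _ hmem _ (by
          intro a _ b _ _
          have h : Commute (Jop V r ⟨0, hr⟩ * Jop V r a) (Jop V r ⟨0, hr⟩ * Jop V r b) :=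
            ((Jop_comm' _ _).mul_right (Jop_comm' _ b)).mul_left
              ((Jop_comm' a _).mul_right (Jop_comm' a b))
          exact (Commute.one_left _).sub_left
            ((Commute.one_right _).sub_right h))⟩
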